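/- Let λ > 0 with θ_λ ∈ (0, π/2) defined by tan θ_λ = 1/λ. Let μ_L, μ_D : (0, θ_λ] → [0, ∞) be continuously differentiable, non-negative and non-decreasing, with M := sup_{(0,θ_λ]} μ_L' < ∞, and assume D(φ) := max{0, −μ_G'(φ)} + M + (1 + tan² θ_λ) μ_D(φ) > 0 for all φ ∈ (0, θ_λ]. Fix ε ∈ (0, 1), set ρ_ε(φ) := ε/D(φ) and f(φ) := φ + ρ_ε(φ)(μ_G(φ) − μ_L(φ) + tan(θ_λ − φ) μ_D(φ)). Suppose the set S := {φ ∈ (0, θ_λ] : μ_L(φ) − tan(θ_λ − φ) μ_D(φ) = μ_G(φ)} is non-empty, and let φ* := max S (which exists). Then the sequence defined by φ⁰ = θ_λ and φ^{k+1} = f(φ^k) remains in [φ*, θ_λ] for all k and converges to φ*. -/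

import Mathlib

open Real Set

/-- The macroscopic function `μ_G(φ) = sin φ · tan (θ − φ)`. -/
noncomputable def muG (θ φ : ℝ) : ℝ := Real.sin φ * Real.tan (θ - φ)

/-- The derivative of `μ_G`: `μ_G'(φ) = cos φ · tan(θ − φ) − sin φ / cos²(θ − φ)`. -/
noncomputable def muGderiv (θ φ : ℝ) : ℝ :=
  Real.cos φ * Real.tan (θ - φ) - Real.sin φ / Real.cos (θ - φ) ^ 2

/-- Convergence of the damped fixed-point iteration
`φ^{k+1} = φ^k + ρ_ε(φ^k)(μ_G(φ^k) − μ_L(φ^k) + tan(θ − φ^k) μ_D(φ^k))`, `φ⁰ = θ_λ`,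
where `ρ_ε(φ) = ε / (max{0, −μ_G'(φ)} + M + (1 + tan²θ) μ_D(φ))`: the iterates remain in
`[φ*, θ_λ]` and converge to the largest solution `φ*`. -/
lemma tan_hasDeriv (θ φ : ℝ) (hc : Real.cos (θ - φ) ≠ 0) :
    HasDerivAt (fun x => Real.tan (θ - x)) (-(1 / Real.cos (θ - φ) ^ 2)) φ := by
  have h1 : HasDerivAt (fun x : ℝ => θ - x) (-1) φ := by
    simpa using (hasDerivAt_id' φ).const_sub θ
  have h2 := (Real.hasDerivAt_tan hc).comp φ h1
  simpa [mul_comm, Function.comp_def] using h2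

lemma muG_hasDeriv (θ φ : ℝ) (hc : Real.cos (θ - φ) ≠ 0) :
    HasDerivAt (muG θ) (muGderiv θ φ) φ := by
  have h := (Real.hasDerivAt_sin φ).mul (tan_hasDeriv θ φ hc)
  unfold muG muGderiv
  refine h.congr_deriv ?_
  ring

lemma muGderiv_hasDeriv (θ φ : ℝ) (hc : Real.cos (θ - φ) ≠ 0) :
    HasDerivAt (muGderiv θ)
      (-Real.sin φ * Real.tan (θ - φ) - 2 * Real.cos φ / Real.cos (θ - φ) ^ 2
        + 2 * Real.sin φ * Real.sin (θ - φ) / Real.cos (θ - φ) ^ 3) φ := by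
  have h1 : HasDerivAt (fun x : ℝ => θ - x) (-1) φ := by
    simpa using (hasDerivAt_id' φ).const_sub θ
  have hA := (Real.hasDerivAt_cos φ).mul (tan_hasDeriv θ φ hc)
  have hcos2 : HasDerivAt (fun x => Real.cos (θ - x) ^ 2)
      (2 * Real.cos (θ - φ) * Real.sin (θ - φ)) φ := by
    have h := (((Real.hasDerivAt_cos (θ - φ)).comp φ h1).pow 2)
    refine h.congr_deriv ?_
    simp [Function.comp]
  have hinv := hcos2.inv (pow_ne_zero 2 hc)
  have hB := (Real.hasDerivAt_sin φ).mul hinv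
  have hT := hA.sub hB
  have : muGderiv θ = fun x => Real.cos x * Real.tan (θ - x) -
      Real.sin x * (Real.cos (θ - x) ^ 2)⁻¹ := by
    funext x; unfold muGderiv; rw [div_eq_mul_inv]
  rw [this]
  refine hT.congr_deriv ?_
  simp only [Pi.inv_apply]
  field_simp
  ring

lemma cos_theta_sub_pos {θ x : ℝ} (hθ : θ ∈ Ioo 0 (π / 2)) (hx : x ∈ Icc 0 θ) :
    0 < Real.cos (θ - x) := by
  apply Real.cos_pos_of_mem_Ioo
  constructor
  · have := Real.pi_pos; simp at *; nlinarith [hx.1, hx.2, hθ.1, hθ.2]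
  · simp at *; nlinarith [hx.1, hx.2, hθ.1, hθ.2]

lemma muGderiv_strictAnti {θ : ℝ} (hθ : θ ∈ Ioo 0 (π / 2)) :
    StrictAntiOn (muGderiv θ) (Icc 0 θ) := by
  apply strictAntiOn_of_deriv_neg (convex_Icc 0 θ)
  · intro x hx
    exact (muGderiv_hasDeriv θ x (cos_theta_sub_pos hθ hx).ne').continuousAt.continuousWithinAt
  · intro x hx
    rw [interior_Icc] at hx
    have hc : 0 < Real.cos (θ - x) := cos_theta_sub_pos hθ ⟨hx.1.le, hx.2.le⟩
    rw [(muGderiv_hasDeriv θ x hc.ne').deriv]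
    set t := θ - x with ht
    have htan : Real.tan t = Real.sin t / Real.cos t := Real.tan_eq_sin_div_cos t
    have hE : -Real.sin x * Real.tan t - 2 * Real.cos x / Real.cos t ^ 2
        + 2 * Real.sin x * Real.sin t / Real.cos t ^ 3
        = (Real.sin x * Real.sin t * (2 - Real.cos t ^ 2) - 2 * Real.cos x * Real.cos t)
          / Real.cos t ^ 3 := by
      rw [htan]; field_simp; ring
    rw [hE]
    apply div_neg_of_neg_of_pos _ (by positivity)
    have hcosθ : 0 < Real.cos θ := Real.cos_pos_of_mem_Ioo
      ⟨by linarith [Real.pi_pos, hθ.1], hθ.2⟩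
    have hadd : Real.cos θ = Real.cos x * Real.cos t - Real.sin x * Real.sin t := by
      have : θ = x + t := by rw [ht]; ring
      rw [this, Real.cos_add]
    have hsx : 0 ≤ Real.sin x := Real.sin_nonneg_of_nonneg_of_le_pi hx.1.le
      (by linarith [Real.pi_gt_three, hθ.2, hx.2])
    have hst : 0 ≤ Real.sin t := Real.sin_nonneg_of_nonneg_of_le_pi (by simp [ht]; linarith [hx.2])
      (by simp [ht]; nlinarith [Real.pi_gt_three, hθ.2, hθ.1, hx.1])
    have hpyth : Real.sin t ^ 2 + Real.cos t ^ 2 = 1 := Real.sin_sq_add_cos_sq t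
    nlinarith [mul_nonneg hsx hst, sq_nonneg (Real.sin t), hpyth]

lemma deriv_nonneg_of_monotoneOn {f : ℝ → ℝ} {f'x a b x : ℝ}
    (hx : x ∈ Ioo a b) (hd : HasDerivAt f f'x x)
    (hm : MonotoneOn f (Ioc a b)) : 0 ≤ f'x := by
  have h := hasDerivAt_iff_tendsto_slope.mp hd
  have h2 : Filter.Tendsto (slope f x) (nhdsWithin x (Ioi x)) (nhds f'x) :=
    h.mono_left (nhdsWithin_mono x (fun y hy => ne_of_gt hy))
  refine ge_of_tendsto h2 ?_
  filter_upwards [Ioo_mem_nhdsGT_of_mem ⟨le_refl x, hx.2⟩] with y hy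
  rw [slope_def_field]
  have hxy : x < y := hy.1
  have hfx : f x ≤ f y := hm ⟨hx.1, hx.2.le⟩ ⟨hx.1.trans hxy, hy.2.le⟩ hxy.le
  have : (0:ℝ) < y - x := by linarith
  rw [div_eq_mul_inv]
  exact mul_nonneg (by linarith) (by positivity)


set_option maxHeartbeats 1000000 in
theorem bem_fixed_point_convergence
    (lam θ : ℝ) (hlam : 0 < lam) (hθ : θ ∈ Ioo 0 (π / 2))
    (htan : Real.tan θ = 1 / lam)
    (μL μD μL' μD' : ℝ → ℝ)
    (hμLd : ∀ φ ∈ Ioc 0 θ, HasDerivAt μL (μL' φ) φ)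
    (hμDd : ∀ φ ∈ Ioc 0 θ, HasDerivAt μD (μD' φ) φ)
    (hμL'c : ContinuousOn μL' (Ioc 0 θ)) (hμD'c : ContinuousOn μD' (Ioc 0 θ))
    (hμLnn : ∀ φ ∈ Ioc 0 θ, 0 ≤ μL φ) (hμDnn : ∀ φ ∈ Ioc 0 θ, 0 ≤ μD φ)
    (hμLmono : MonotoneOn μL (Ioc 0 θ)) (hμDmono : MonotoneOn μD (Ioc 0 θ))
    (M : ℝ) (hM : IsLUB (μL' '' Ioc 0 θ) M)
    (hD : ∀ φ ∈ Ioc 0 θ,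
      0 < max 0 (-(muGderiv θ φ)) + M + (1 + Real.tan θ ^ 2) * μD φ)
    (ε : ℝ) (hε : ε ∈ Ioo (0 : ℝ) 1)
    (seq : ℕ → ℝ) (hseq0 : seq 0 = θ)
    (hseqrec : ∀ k : ℕ, seq (k + 1)
      = seq k +
        (ε / (max 0 (-(muGderiv θ (seq k))) + M + (1 + Real.tan θ ^ 2) * μD (seq k))) *
          (muG θ (seq k) - μL (seq k) + Real.tan (θ - seq k) * μD (seq k)))
    (hS : ∃ φ ∈ Ioc 0 θ, μL φ - Real.tan (θ - φ) * μD φ = muG θ φ) :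
    ∃ φs, IsGreatest {φ ∈ Ioc 0 θ | μL φ - Real.tan (θ - φ) * μD φ = muG θ φ} φs ∧
      (∀ k : ℕ, seq k ∈ Icc φs θ) ∧
      Filter.Tendsto seq Filter.atTop (nhds φs) := by
  obtain ⟨hθ0, hθ2⟩ := hθ
  obtain ⟨hε0, hε1⟩ := hε
  set D : ℝ → ℝ := fun φ => max 0 (-(muGderiv θ φ)) + M + (1 + Real.tan θ ^ 2) * μD φ
    with hDdef
  set g : ℝ → ℝ := fun φ => muG θ φ - μL φ + Real.tan (θ - φ) * μD φ with hgdef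
  set g' : ℝ → ℝ := fun φ => muGderiv θ φ - μL' φ
    + (-(1 / Real.cos (θ - φ) ^ 2) * μD φ + Real.tan (θ - φ) * μD' φ) with hg'def
  have hDpos : ∀ φ ∈ Ioc 0 θ, 0 < D φ := fun φ hφ => hD φ hφ
  have hrec : ∀ k : ℕ, seq (k + 1) = seq k + (ε / D (seq k)) * g (seq k) := fun k =>
    hseqrec k
  have hcos : ∀ x ∈ Ioc (0:ℝ) θ, 0 < Real.cos (θ - x) := fun x hx =>
    cos_theta_sub_pos ⟨hθ0, hθ2⟩ ⟨hx.1.le, hx.2⟩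
  have hg'd : ∀ φ ∈ Ioc 0 θ, HasDerivAt g (g' φ) φ := by
    intro φ hφ
    exact ((muG_hasDeriv θ φ (hcos φ hφ).ne').sub (hμLd φ hφ)).add
      ((tan_hasDeriv θ φ (hcos φ hφ).ne').mul (hμDd φ hφ))
  have hgc : ContinuousOn g (Ioc 0 θ) := fun x hx =>
    ((hg'd x hx).continuousAt).continuousWithinAt
  have hgiff : ∀ φ, (μL φ - Real.tan (θ - φ) * μD φ = muG θ φ) ↔ g φ = 0 := by
    intro φ
    constructor <;> intro h <;> simp only [hgdef] at * <;> linarith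
  have htannn : ∀ x ∈ Ioc (0:ℝ) θ, 0 ≤ Real.tan (θ - x) := by
    intro x hx
    exact Real.tan_nonneg_of_nonneg_of_le_pi_div_two (by linarith [hx.2]) (by linarith [hx.1])
  have htanle : ∀ x ∈ Ioc (0:ℝ) θ, Real.tan (θ - x) ≤ Real.tan θ := by
    intro x hx
    exact le_of_lt (Real.tan_lt_tan_of_nonneg_of_lt_pi_div_two
      (by linarith [hx.2]) hθ2 (by linarith [hx.1]))
  have h1tan : ∀ x ∈ Ioc (0:ℝ) θ, 1 / Real.cos (θ - x) ^ 2 = 1 + Real.tan (θ - x) ^ 2 := by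
    intro x hx
    have hc := hcos x hx
    rw [Real.tan_eq_sin_div_cos]
    have hp := Real.sin_sq_add_cos_sq (θ - x)
    field_simp
    linarith
  -- key derivative bound
  have hkey : ∀ ξ ∈ Ioo (0:ℝ) θ, ∀ φ ∈ Ioc (0:ℝ) θ, ξ ≤ φ → -(g' ξ) ≤ D φ := by
    intro ξ hξ φ hφ hle
    have hξIoc : ξ ∈ Ioc (0:ℝ) θ := ⟨hξ.1, hξ.2.le⟩
    have hmono : muGderiv θ φ ≤ muGderiv θ ξ :=
      (muGderiv_strictAnti ⟨hθ0, hθ2⟩).antitoneOn ⟨hξ.1.le, hξ.2.le⟩ ⟨by linarith [hφ.1], hφ.2⟩ hle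
    have h1 : -(muGderiv θ ξ) ≤ max 0 (-(muGderiv θ φ)) :=
      le_trans (by linarith) (le_max_right _ _)
    have h2 : μL' ξ ≤ M := hM.1 ⟨ξ, hξIoc, rfl⟩
    have h3 : (1 / Real.cos (θ - ξ) ^ 2) * μD ξ ≤ (1 + Real.tan θ ^ 2) * μD φ := by
      rw [h1tan ξ hξIoc]
      have hta := htannn ξ hξIoc
      have htb := htanle ξ hξIoc
      have hDnn := hμDnn ξ hξIoc
      have hDle := hμDmono hξIoc hφ hle
      nlinarith [mul_le_mul_of_nonneg_left hDle (by positivity : (0:ℝ) ≤ 1 + Real.tan θ^2),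
        mul_le_mul_of_nonneg_right
          (by nlinarith : Real.tan (θ-ξ)^2 ≤ Real.tan θ^2) hDnn]
    have h4 : 0 ≤ Real.tan (θ - ξ) * μD' ξ :=
      mul_nonneg (htannn ξ hξIoc)
        (deriv_nonneg_of_monotoneOn hξ (hμDd ξ hξIoc) hμDmono)
    simp only [hg'def, hDdef]
    linarith [h1, h2, h3, h4]
  -- construction of the greatest solution
  obtain ⟨φ0, hφ0, hgφ0⟩ := hS
  have hgφ0' : g φ0 = 0 := (hgiff φ0).1 hgφ0
  have hsub0 : Icc φ0 θ ⊆ Ioc 0 θ := fun x hx => ⟨lt_of_lt_of_le hφ0.1 hx.1, hx.2⟩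
  have hScl : IsClosed {φ | φ ∈ Icc φ0 θ ∧ g φ = 0} := by
    have h := (hgc.mono hsub0).preimage_isClosed_of_isClosed isClosed_Icc
      (isClosed_singleton (x := (0:ℝ)))
    convert h using 1
    rfl
  have hne : ({φ | φ ∈ Icc φ0 θ ∧ g φ = 0} : Set ℝ).Nonempty :=
    ⟨φ0, ⟨⟨le_refl _, hφ0.2⟩, hgφ0'⟩⟩
  have hbddS : BddAbove {φ | φ ∈ Icc φ0 θ ∧ g φ = 0} := ⟨θ, fun x hx => hx.1.2⟩
  set φs := sSup {φ | φ ∈ Icc φ0 θ ∧ g φ = 0} with hφsdef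
  have hφsmem : φs ∈ {φ | φ ∈ Icc φ0 θ ∧ g φ = 0} := hScl.csSup_mem hne hbddS
  have hφs0 : 0 < φs := lt_of_lt_of_le hφ0.1 hφsmem.1.1
  have hφsθ : φs ≤ θ := hφsmem.1.2
  have hφsIoc : φs ∈ Ioc (0:ℝ) θ := ⟨hφs0, hφsθ⟩
  have hgφs : g φs = 0 := hφsmem.2
  have hgrS : IsGreatest {φ ∈ Ioc 0 θ | μL φ - Real.tan (θ - φ) * μD φ = muG θ φ} φs := by
    constructor
    · exact ⟨hφsIoc, (hgiff φs).2 hgφs⟩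
    · intro ψ hψ
      obtain ⟨hψIoc, hψeq⟩ := hψ
      have hgψ : g ψ = 0 := (hgiff ψ).1 hψeq
      rcases le_or_gt ψ φ0 with h | h
      · exact h.trans hφsmem.1.1
      · exact le_csSup hbddS ⟨⟨h.le, hψIoc.2⟩, hgψ⟩
  -- g is nonpositive on [φs, θ]
  have hgθle : g θ ≤ 0 := by
    have h1 : g θ = -μL θ := by
      simp [hgdef, muG, sub_self, Real.tan_zero]
    rw [h1]
    linarith [hμLnn θ ⟨hθ0, le_refl θ⟩]
  have hgle : ∀ φ ∈ Icc φs θ, g φ ≤ 0 := by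
    intro φ hφ
    by_contra hpos
    push_neg at hpos
    have hφIoc : φ ∈ Ioc (0:ℝ) θ := ⟨lt_of_lt_of_le hφs0 hφ.1, hφ.2⟩
    have hφlt : φ < θ := by
      rcases lt_or_eq_of_le hφ.2 with h | h
      · exact h
      · rw [h] at hpos; linarith
    have hivt := intermediate_value_Icc' hφlt.le
      (hgc.mono (fun x hx => ⟨lt_of_lt_of_le hφIoc.1 hx.1, hx.2⟩))
    have h0mem : (0:ℝ) ∈ Icc (g θ) (g φ) := ⟨hgθle, hpos.le⟩
    obtain ⟨c, hc, hgc0⟩ := hivt h0mem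
    have hcS : c ∈ {φ ∈ Ioc 0 θ | μL φ - Real.tan (θ - φ) * μD φ = muG θ φ} :=
      ⟨⟨lt_of_lt_of_le hφIoc.1 hc.1, hc.2⟩, (hgiff c).2 hgc0⟩
    have hcle : c ≤ φs := hgrS.2 hcS
    have hφgtφs : φs < φ := by
      rcases lt_or_eq_of_le hφ.1 with h | h
      · exact h
      · rw [← h] at hpos; rw [hgφs] at hpos; linarith
    linarith [hc.1]
  -- one step of the iteration stays in [φs, θ]
  have hstep : ∀ φ ∈ Icc φs θ,
      φs ≤ φ + (ε / D φ) * g φ ∧ φ + (ε / D φ) * g φ ≤ φ := by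
    intro φ hφ
    have hφIoc : φ ∈ Ioc (0:ℝ) θ := ⟨lt_of_lt_of_le hφs0 hφ.1, hφ.2⟩
    have hDφ := hDpos φ hφIoc
    have hρnn : 0 ≤ ε / D φ := div_nonneg hε0.le hDφ.le
    have hup : φ + (ε / D φ) * g φ ≤ φ := by
      nlinarith [mul_nonpos_of_nonneg_of_nonpos hρnn (hgle φ hφ)]
    refine ⟨?_, hup⟩
    rcases eq_or_lt_of_le hφ.1 with heq | hlt
    · have : g φ = 0 := by rw [← heq]; exact hgφs
      rw [this]; simp [← heq]
    · -- mean value theorem on [φs, φ]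
      have hsub : Icc φs φ ⊆ Ioc (0:ℝ) θ := fun x hx =>
        ⟨lt_of_lt_of_le hφs0 hx.1, hx.2.trans hφ.2⟩
      obtain ⟨ξ, hξ, hξeq⟩ := exists_hasDerivAt_eq_slope g g' hlt
        (hgc.mono hsub)
        (fun x hx => hg'd x (hsub ⟨hx.1.le, hx.2.le⟩))
      have hξIoo : ξ ∈ Ioo (0:ℝ) θ :=
        ⟨lt_of_lt_of_le hφs0 hξ.1.le, lt_of_lt_of_le hξ.2 hφ.2⟩
      have hbnd := hkey ξ hξIoo φ hφIoc (hξ.2.le)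
      have hsubne : φ - φs ≠ 0 := sub_ne_zero.mpr (ne_of_gt hlt)
      have hgφeq : g φ = g' ξ * (φ - φs) := by
        rw [hξeq, hgφs, sub_zero, div_mul_cancel₀ _ hsubne]
      have hεD : (ε / D φ) * D φ = ε := div_mul_cancel₀ ε hDφ.ne'
      have h1 : 0 ≤ (ε / D φ) * (φ - φs) := mul_nonneg hρnn (by linarith)
      have h2 : (-(D φ)) * ((ε / D φ) * (φ - φs)) ≤ g' ξ * ((ε / D φ) * (φ - φs)) :=
        mul_le_mul_of_nonneg_right (by linarith) h1
      have h3 : (-(D φ)) * ((ε / D φ) * (φ - φs)) = -(ε * (φ - φs)) := by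
        field_simp
      have h4 : ε / D φ * g φ = g' ξ * (ε / D φ * (φ - φs)) := by rw [hgφeq]; ring
      have h5 : 0 ≤ (1 - ε) * (φ - φs) :=
        mul_nonneg (by linarith) (by linarith)
      nlinarith [h2, h3, h4, h5]
  -- the iterates stay in [φs, θ]
  have hmemseq : ∀ k : ℕ, seq k ∈ Icc φs θ := by
    intro k
    induction k with
    | zero => rw [hseq0]; exact ⟨hφsθ, le_refl θ⟩
    | succ n ih =>
      rw [hrec n]
      obtain ⟨h1, h2⟩ := hstep (seq n) ih
      exact ⟨h1, h2.trans ih.2⟩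
  have hdec : ∀ k : ℕ, seq (k + 1) ≤ seq k := by
    intro k
    rw [hrec k]
    exact (hstep (seq k) (hmemseq k)).2
  have hant : Antitone seq := antitone_nat_of_succ_le hdec
  have hbddseq : BddBelow (Set.range seq) := by
    refine ⟨φs, ?_⟩
    rintro _ ⟨k, rfl⟩
    exact (hmemseq k).1
  have htend := tendsto_atTop_ciInf hant hbddseq
  set L := ⨅ k, seq k with hLdef
  have hLlb : φs ≤ L := le_ciInf fun k => (hmemseq k).1
  have hLub : L ≤ θ := by
    have := ciInf_le hbddseq 0
    rw [hseq0] at this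
    exact this
  have hLIoc : L ∈ Ioc (0:ℝ) θ := ⟨lt_of_lt_of_le hφs0 hLlb, hLub⟩
  -- continuity of the iteration map at L
  have hcL : Real.cos (θ - L) ≠ 0 := (hcos L hLIoc).ne'
  have hcontD : ContinuousAt D L := by
    rw [hDdef]
    exact ((continuousAt_const.max
      ((muGderiv_hasDeriv θ L hcL).continuousAt.neg)).add continuousAt_const).add
      (continuousAt_const.mul (hμDd L hLIoc).continuousAt)
  have hcontg : ContinuousAt g L := (hg'd L hLIoc).continuousAt
  have hDL : D L ≠ 0 := (hDpos L hLIoc).ne'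
  have hcontF : ContinuousAt (fun φ => φ + (ε / D φ) * g φ) L :=
    continuousAt_id.add ((continuousAt_const.div hcontD hDL).mul hcontg)
  have htend1 : Filter.Tendsto (fun k => seq (k + 1)) Filter.atTop (nhds L) :=
    htend.comp (Filter.tendsto_add_atTop_nat 1)
  have htend2 : Filter.Tendsto (fun k => seq k + (ε / D (seq k)) * g (seq k))
      Filter.atTop (nhds (L + (ε / D L) * g L)) := hcontF.tendsto.comp htend
  have hfix : L + (ε / D L) * g L = L := by
    apply tendsto_nhds_unique _ htend1
    have : (fun k => seq (k + 1)) = fun k => seq k + (ε / D (seq k)) * g (seq k) := by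
      funext k; exact hrec k
    rw [this]
    exact htend2
  have hgL : g L = 0 := by
    have h1 : (ε / D L) * g L = 0 := by linarith
    have h2 : ε / D L ≠ 0 := div_ne_zero hε0.ne' hDL
    exact (mul_eq_zero.mp h1).resolve_left h2
  have hLle : L ≤ φs := hgrS.2 ⟨hLIoc, (hgiff L).2 hgL⟩
  have hLeq : L = φs := le_antisymm hLle hLlb
  exact ⟨φs, hgrS, hmemseq, hLeq ▸ htend⟩
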